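/- For n, r ≥ 4 with r ≤ C(n,2), the map c: binom([n],2) → [n−2] given by c(S) = min(min S, n−2) is a proper coloring of the Kneser hypergraph without multiplicities kg^r_{r-1}(binom([n],2)); hence χ(kg^r_{r-1}(binom([n],2))) ≤ n−2. -/
import Mathlib


/-- The family of all 2-subsets of `[n] = {1,…,n}`. -/
def pairs (n : ℕ) : Finset (Finset ℕ) := (Finset.Icc 1 n).powersetCard 2

/-- An edge of the multiplicity-free Kneser hypergraph `kg^r_s(S)`. -/
def kgEdge (r s : ℕ) (S : Finset (Finset ℕ)) (e : Finset (Finset ℕ)) : Prop :=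
  e.card = r ∧ e ⊆ S ∧ ∀ i : ℕ, (e.filter fun T => i ∈ T).card ≤ s

/-- The chromatic number of `kg^r_s(S)`. -/
noncomputable def chromkg (r s : ℕ) (S : Finset (Finset ℕ)) : ℕ :=
  sInf {m | ∃ c : Finset ℕ → Fin m,
    ∀ e, kgEdge r s S e → ∃ A ∈ e, ∃ B ∈ e, c A ≠ c B}

/-- For `n, r ≥ 4` with `r ≤ C(n,2)`, the map `c(S) = min(min S, n-2)` is a
proper coloring of `kg^r_{r-1}(binom([n],2))` with `n-2` colors; hence
`χ(kg^r_{r-1}(binom([n],2))) ≤ n - 2`. -/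
theorem stmt14 (n r : ℕ) (hn : 4 ≤ n) (hr : 4 ≤ r) (hrc : r ≤ n.choose 2) :
    (∀ e, kgEdge r (r - 1) (pairs n) e →
      ∃ A ∈ e, ∃ B ∈ e,
        min (sInf (A : Set ℕ)) (n - 2) ≠ min (sInf (B : Set ℕ)) (n - 2)) ∧
    chromkg r (r - 1) (pairs n) ≤ n - 2 := by
  have hmemInf : ∀ A : Finset ℕ, A ∈ pairs n → sInf (A : Set ℕ) ∈ A ∧ A ⊆ Finset.Icc 1 n := by
    intro A hA
    rw [pairs, Finset.mem_powersetCard] at hA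
    have hne : (A : Set ℕ).Nonempty := by
      rw [Finset.coe_nonempty, ← Finset.card_pos, hA.2]; omega
    exact ⟨Nat.sInf_mem hne, hA.1⟩
  have key : ∀ e, kgEdge r (r - 1) (pairs n) e →
      ∃ A ∈ e, ∃ B ∈ e,
        min (sInf (A : Set ℕ)) (n - 2) ≠ min (sInf (B : Set ℕ)) (n - 2) := by
    rintro e ⟨hcard, hsub, hfil⟩
    by_contra h
    push_neg at h
    have hne : e.Nonempty := by rw [← Finset.card_pos, hcard]; omega
    obtain ⟨A0, hA0⟩ := hne
    set k := min (sInf (A0 : Set ℕ)) (n - 2) with hk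
    have hkle : k ≤ n - 2 := min_le_right _ _
    have hall : ∀ A ∈ e, min (sInf (A : Set ℕ)) (n - 2) = k := fun A hA => h A hA A0 hA0
    rcases lt_or_eq_of_le hkle with hlt | heq
    · -- every A contains k
      have hkin : ∀ A ∈ e, k ∈ A := by
        intro A hA
        have h1 := hall A hA
        have h2 : sInf (A : Set ℕ) = k := by
          rcases min_cases (sInf (A : Set ℕ)) (n - 2) with ⟨h3, _⟩ | ⟨h3, h4⟩
          · omega
          · omega
        rw [← h2]
        exact (hmemInf A (hsub hA)).1
      have hfe : e.filter (fun T => k ∈ T) = e := Finset.filter_true_of_mem hkin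
      have h5 := hfil k
      rw [hfe, hcard] at h5
      omega
    · -- every A ⊆ Icc (n-2) n
      have hinc : e ⊆ (Finset.Icc (n - 2) n).powersetCard 2 := by
        intro A hA
        obtain ⟨hinf, hIcc⟩ := hmemInf A (hsub hA)
        have hA2 : A.card = 2 := by
          have := hsub hA
          rw [pairs, Finset.mem_powersetCard] at this
          exact this.2
        rw [Finset.mem_powersetCard]
        refine ⟨fun x hx => ?_, hA2⟩
        have hlo : sInf (A : Set ℕ) ≤ x := Nat.sInf_le hx
        have h1 := hall A hA
        have hge : n - 2 ≤ sInf (A : Set ℕ) := by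
          rcases min_cases (sInf (A : Set ℕ)) (n - 2) with ⟨h3, h4⟩ | ⟨h3, _⟩ <;> omega
        have hhi : x ≤ n := (Finset.mem_Icc.mp (hIcc hx)).2
        exact Finset.mem_Icc.mpr ⟨by omega, hhi⟩
      have hle := Finset.card_le_card hinc
      rw [hcard, Finset.card_powersetCard, Nat.card_Icc] at hle
      have : n + 1 - (n - 2) = 3 := by omega
      rw [this] at hle
      norm_num [Nat.choose] at hle
      omega
  refine ⟨key, ?_⟩
  apply Nat.sInf_le
  refine ⟨fun A => ⟨min (sInf (A : Set ℕ)) (n - 2) - 1, by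
    have := min_le_right (sInf (A : Set ℕ)) (n - 2); omega⟩, ?_⟩
  intro e he
  obtain ⟨A, hA, B, hB, hAB⟩ := key e he
  refine ⟨A, hA, B, hB, fun hc => hAB ?_⟩
  have hge : ∀ C : Finset ℕ, C ∈ e → 1 ≤ sInf (C : Set ℕ) := by
    intro C hC
    obtain ⟨hinf, hIcc⟩ := hmemInf C (he.2.1 hC)
    exact (Finset.mem_Icc.mp (hIcc hinf)).1
  have hA1 := hge A hA
  have hB1 := hge B hB
  have := Fin.mk.injEq _ _ _ _ ▸ hc
  simp only [Fin.mk.injEq] at hc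
  omega
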